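/- arXiv:1706.06957 — 4 statements merged into one kernel-verified Lean document; each statement's English description precedes it below -/
import Mathlib

section
/- Suppose Γ is a free abelian group with basis {e_i : i ∈ I}, I totally ordered, and c is a 2-cocycle on Γ such that for each i < j there exists a square root p_{ij} ∈ K× of c(e_i,e_j)·c(e_j,e_i)⁻¹. Let b be the alternating bicharacter on Γ with b(e_i,e_j) = p_{ij} for i < j. Then there is a function f : Γ → K× such that c(s,t) = f(s)·f(t)·f(s+t)⁻¹·b(s,t) for all s,t ∈ Γ. -/
section helpers
variable {K : Type*} [Field K] {G : Type*} [AddCommGroup G]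

lemma aux_cocycle_anti_bimul
    (c : G → G → Kˣ) (hc : ∀ s t u, c s (t + u) * c t u = c (s + t) u * c s t)
    (s t u : G) :
    c (s+t) u * (c u (s+t))⁻¹ = (c s u * (c u s)⁻¹) * (c t u * (c u t)⁻¹) := by
  have h1 := congrArg Units.val (hc s t u)
  have h2 := congrArg Units.val (hc u s t)
  have h3 := congrArg Units.val (hc s u t)
  rw [add_comm u t] at h3
  rw [add_comm u s] at h2
  simp only [Units.val_mul] at h1 h2 h3
  rw [Units.ext_iff]
  simp only [Units.val_mul, Units.val_inv_eq_inv_val]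
  have n1 : ((c s t : Kˣ) : K) ≠ 0 := Units.ne_zero _
  have n2 : ((c u (s+t) : Kˣ) : K) ≠ 0 := Units.ne_zero _
  have n3 : ((c u s : Kˣ) : K) ≠ 0 := Units.ne_zero _
  have n4 : ((c u t : Kˣ) : K) ≠ 0 := Units.ne_zero _
  field_simp
  apply mul_left_cancel₀ n1
  linear_combination (-(↑(c u s) * ↑(c u t)) : K) * h1 + ((↑(c u s) * ↑(c t u)) : K) * h3 + (-(↑(c s u) * ↑(c t u)) : K) * h2

lemma aux_finsupp_hom_trivial {I : Type*} {M : Type*} [CommGroup M]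
    (φ : (I →₀ ℤ) → M) (hmul : ∀ s t, φ (s + t) = φ s * φ t)
    (hone : ∀ i, φ (Finsupp.single i 1) = 1) : ∀ s, φ s = 1 := by
  let F : (I →₀ ℤ) →+ Additive M :=
    AddMonoidHom.mk' (fun s => Additive.ofMul (φ s))
      (fun x y => congrArg Additive.ofMul (hmul x y))
  have hF : F = 0 := by
    apply Finsupp.addHom_ext
    intro i n
    have h1 : Finsupp.single i n = n • Finsupp.single i (1 : ℤ) := by
      simp [Finsupp.smul_single]
    rw [h1, map_zsmul]
    have h2 : F (Finsupp.single i (1 : ℤ)) = 0 := by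
      show Additive.ofMul (φ (Finsupp.single i 1)) = 0
      rw [hone i]; rfl
    rw [h2]
    simp
  intro s
  have := DFunLike.congr_fun hF s
  exact Additive.toMul.injective this

end helpers


@[ext]
structure ExtE (K : Type*) [Field K] (I : Type*) where
  a : Kˣ
  v : I →₀ ℤ

theorem aux_symm_cocycle_coboundary {K : Type*} [Field K] {I : Type*}
    (c : (I →₀ ℤ) → (I →₀ ℤ) → Kˣ)
    (hc : ∀ s t u, c s (t + u) * c t u = c (s + t) u * c s t)
    (hsymm : ∀ s t, c s t = c t s) :
    ∃ f : (I →₀ ℤ) → Kˣ, ∀ s t, c s t = f s * f t * (f (s + t))⁻¹ := by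
  have hs0 : ∀ s, c s 0 = c 0 0 := by
    intro s
    have h := hc s 0 0
    simp only [add_zero] at h
    exact (mul_left_cancel h).symm
  have h0s : ∀ s, c 0 s = c 0 0 := fun s => (hsymm 0 s).trans (hs0 s)
  letI : CommGroup (ExtE K I) :=
  { mul := fun x y => ⟨x.a * y.a * c x.v y.v * (c 0 0)⁻¹, x.v + y.v⟩
    one := ⟨1, 0⟩
    inv := fun x => ⟨x.a⁻¹ * (c x.v (-x.v))⁻¹ * c 0 0, -x.v⟩
    mul_assoc := by
      rintro ⟨x, xs⟩ ⟨y, ys⟩ ⟨z, zs⟩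
      refine ExtE.ext ?_ (add_assoc _ _ _)
      show x * y * c xs ys * (c 0 0)⁻¹ * z * c (xs + ys) zs * (c 0 0)⁻¹ =
        x * (y * z * c ys zs * (c 0 0)⁻¹) * c xs (ys + zs) * (c 0 0)⁻¹
      have h := congrArg Units.val (hc xs ys zs)
      rw [Units.ext_iff]
      simp only [Units.val_mul, Units.val_inv_eq_inv_val] at h ⊢
      have n0 : ((c 0 0 : Kˣ) : K) ≠ 0 := Units.ne_zero _
      field_simp
      ring
      linear_combination (-1 : K) * h
    one_mul := by
      rintro ⟨y, ys⟩
      refine ExtE.ext ?_ (zero_add _)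
      show 1 * y * c 0 ys * (c 0 0)⁻¹ = y
      rw [h0s ys]
      group
    mul_one := by
      rintro ⟨y, ys⟩
      refine ExtE.ext ?_ (add_zero _)
      show y * 1 * c ys 0 * (c 0 0)⁻¹ = y
      rw [hs0 ys]
      group
    inv_mul_cancel := by
      rintro ⟨x, xs⟩
      refine ExtE.ext ?_ (neg_add_cancel _)
      show x⁻¹ * (c xs (-xs))⁻¹ * c 0 0 * x * c (-xs) xs * (c 0 0)⁻¹ = 1
      rw [hsymm (-xs) xs, Units.ext_iff]
      simp only [Units.val_mul, Units.val_inv_eq_inv_val, Units.val_one]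
      have n0 : ((c 0 0 : Kˣ) : K) ≠ 0 := Units.ne_zero _
      have n1 : ((c xs (-xs) : Kˣ) : K) ≠ 0 := Units.ne_zero _
      have n2 : ((x : Kˣ) : K) ≠ 0 := Units.ne_zero _
      field_simp
    mul_comm := by
      rintro ⟨x, xs⟩ ⟨y, ys⟩
      refine ExtE.ext ?_ (add_comm _ _)
      show x * y * c xs ys * (c 0 0)⁻¹ = y * x * c ys xs * (c 0 0)⁻¹
      rw [hsymm xs ys, mul_comm x y] }
  let σ : (I →₀ ℤ) →+ Additive (ExtE K I) :=
    Finsupp.liftAddHom fun i =>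
      zmultiplesHom _ (Additive.ofMul (ExtE.mk 1 (Finsupp.single i 1)))
  let P : Additive (ExtE K I) →+ (I →₀ ℤ) :=
    AddMonoidHom.mk' (fun x => (Additive.toMul x).v) (fun x y => rfl)
  have hcomp : P.comp σ = AddMonoidHom.id _ := by
    apply Finsupp.addHom_ext
    intro i n
    have h1 : σ (Finsupp.single i n) =
        n • Additive.ofMul (ExtE.mk 1 (Finsupp.single i 1)) := by
      simp [σ, Finsupp.liftAddHom_apply_single]
    simp only [AddMonoidHom.coe_comp, Function.comp_apply, AddMonoidHom.id_apply, h1,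
      map_zsmul]
    show n • (ExtE.mk (1 : Kˣ) (Finsupp.single i 1)).v = Finsupp.single i n
    simp [Finsupp.smul_single]
  have hPσ : ∀ s, (Additive.toMul (σ s)).v = s := by
    intro s
    exact DFunLike.congr_fun hcomp s
  set g : (I →₀ ℤ) → Kˣ := fun s => (Additive.toMul (σ s)).a with hg
  have key : ∀ s t, g (s + t) = g s * g t * c s t * (c 0 0)⁻¹ := by
    intro s t
    have h := map_add σ s t
    have h' : g (s + t) = g s * g t *
        c (Additive.toMul (σ s)).v (Additive.toMul (σ t)).v * (c 0 0)⁻¹ :=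
      congrArg (fun x => (Additive.toMul x).a) h
    rw [hPσ s, hPσ t] at h'
    exact h'
  refine ⟨fun s => (g s)⁻¹ * c 0 0, fun s t => ?_⟩
  show c s t = (g s)⁻¹ * c 0 0 * ((g t)⁻¹ * c 0 0) * ((g (s + t))⁻¹ * c 0 0)⁻¹
  rw [key s t]
  rw [Units.ext_iff]
  simp only [Units.val_mul, Units.val_inv_eq_inv_val, mul_inv_rev, inv_inv]
  have n0 : ((c 0 0 : Kˣ) : K) ≠ 0 := Units.ne_zero _
  have n1 : ((g s : Kˣ) : K) ≠ 0 := Units.ne_zero _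
  have n2 : ((g t : Kˣ) : K) ≠ 0 := Units.ne_zero _
  field_simp

/-- Let `Γ = ⊕_{i ∈ I} ℤ e_i` be free abelian with totally ordered basis, `c` a
2-cocycle on `Γ` such that each `c(e_i,e_j)·c(e_j,e_i)⁻¹` (for `i < j`) admits a
square root `p i j`, and let `b` be the alternating bicharacter with
`b(e_i,e_j) = p i j` for `i < j`.  Then `c` differs from `b` by a coboundary. -/
theorem stmt_8 {K : Type*} [Field K] {I : Type*} [LinearOrder I]
    (c : (I →₀ ℤ) → (I →₀ ℤ) → Kˣ)
    (hc : ∀ s t u : I →₀ ℤ, c s (t + u) * c t u = c (s + t) u * c s t)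
    (p : I → I → Kˣ)
    (hp : ∀ i j : I, i < j →
      p i j * p i j = c (Finsupp.single i 1) (Finsupp.single j 1) *
        (c (Finsupp.single j 1) (Finsupp.single i 1))⁻¹)
    (b : (I →₀ ℤ) → (I →₀ ℤ) → Kˣ)
    (hb₁ : ∀ s t u : I →₀ ℤ, b (s + t) u = b s u * b t u)
    (hb₂ : ∀ s t u : I →₀ ℤ, b s (t + u) = b s t * b s u)
    (hbalt : ∀ s : I →₀ ℤ, b s s = 1)
    (hb : ∀ i j : I, i < j → b (Finsupp.single i 1) (Finsupp.single j 1) = p i j) :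
    ∃ f : (I →₀ ℤ) → Kˣ, ∀ s t : I →₀ ℤ,
      c s t = f s * f t * (f (s + t))⁻¹ * b s t := by
  have cocycle_anti_bimul := fun (c' : (I →₀ ℤ) → (I →₀ ℤ) → Kˣ) hc' => aux_cocycle_anti_bimul (K := K) c' hc'
  have finsupp_hom_trivial := fun (φ : (I →₀ ℤ) → Kˣ) h1 h2 => aux_finsupp_hom_trivial φ h1 h2
  have symm_cocycle_coboundary := fun (c' : (I →₀ ℤ) → (I →₀ ℤ) → Kˣ) hc' hs => aux_symm_cocycle_coboundary c' hc' hs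
  have hbanti : ∀ s t : I →₀ ℤ, b t s = (b s t)⁻¹ := by
    intro s t
    have h := hbalt (s + t)
    rw [hb₁, hb₂, hb₂, hbalt, hbalt, one_mul, mul_one] at h
    exact eq_inv_of_mul_eq_one_right h
  let c' : (I →₀ ℤ) → (I →₀ ℤ) → Kˣ := fun s t => c s t * (b s t)⁻¹
  have hc'unfold : ∀ s t, c' s t = c s t * (b s t)⁻¹ := fun s t => rfl
  have hc' : ∀ s t u, c' s (t + u) * c' t u = c' (s + t) u * c' s t := by
    intro s t u
    rw [hc'unfold, hc'unfold, hc'unfold, hc'unfold, hb₂ s t u, hb₁ s t u]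
    have h := congrArg Units.val (hc s t u)
    simp only [Units.val_mul] at h
    rw [Units.ext_iff]
    simp only [Units.val_mul, Units.val_inv_eq_inv_val, mul_inv_rev]
    have n1 : ((b s t : Kˣ) : K) ≠ 0 := Units.ne_zero _
    have n2 : ((b s u : Kˣ) : K) ≠ 0 := Units.ne_zero _
    have n3 : ((b t u : Kˣ) : K) ≠ 0 := Units.ne_zero _
    field_simp
    linear_combination h
  have hBmul := cocycle_anti_bimul c' hc'
  have hlt : ∀ i j : I, i < j →
      c' (Finsupp.single i 1) (Finsupp.single j 1) =
        c' (Finsupp.single j 1) (Finsupp.single i 1) := by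
    intro i j hij
    rw [hc'unfold, hc'unfold]
    have hpij := congrArg Units.val (hp i j hij)
    have hbij := hb i j hij
    have hbji : b (Finsupp.single j 1) (Finsupp.single i 1) = (p i j)⁻¹ := by
      rw [hbanti, hbij]
    rw [hbij, hbji, inv_inv]
    have := congrArg Units.val (hp i j hij)
    rw [Units.ext_iff]
    simp only [Units.val_mul, Units.val_inv_eq_inv_val] at this ⊢
    have n1 : ((p i j : Kˣ) : K) ≠ 0 := Units.ne_zero _
    have n2 : ((c (Finsupp.single j 1) (Finsupp.single i 1) : Kˣ) : K) ≠ 0 := Units.ne_zero _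
    field_simp at this ⊢
    linear_combination (-(1:K)) * this
  have hsingle_symm : ∀ i j : I,
      c' (Finsupp.single i 1) (Finsupp.single j 1) =
        c' (Finsupp.single j 1) (Finsupp.single i 1) := by
    intro i j
    rcases lt_trichotomy i j with hij | rfl | hij
    · exact hlt i j hij
    · rfl
    · exact (hlt j i hij).symm
  have hBsingle : ∀ i j : I,
      c' (Finsupp.single i 1) (Finsupp.single j 1) *
        (c' (Finsupp.single j 1) (Finsupp.single i 1))⁻¹ = 1 := by
    intro i j
    rw [hsingle_symm i j, mul_inv_cancel]
  have hA : ∀ (j : I) (s : I →₀ ℤ),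
      c' s (Finsupp.single j 1) * (c' (Finsupp.single j 1) s)⁻¹ = 1 := by
    intro j
    apply finsupp_hom_trivial (fun s => c' s (Finsupp.single j 1) * (c' (Finsupp.single j 1) s)⁻¹)
    · intro s t; exact hBmul s t (Finsupp.single j 1)
    · intro i; exact hBsingle i j
  have hB : ∀ s t, c' s t * (c' t s)⁻¹ = 1 := by
    intro s
    apply finsupp_hom_trivial (fun t => c' s t * (c' t s)⁻¹)
    · intro t u
      have h1 := hBmul t u s
      have h2 := congrArg (fun x : Kˣ => x⁻¹) h1
      simp only [mul_inv_rev, inv_inv] at h2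
      exact h2.trans (mul_comm _ _)
    · intro i; exact hA i s
  have hsymm' : ∀ s t, c' s t = c' t s := fun s t => mul_inv_eq_one.mp (hB s t)
  obtain ⟨f, hf⟩ := symm_cocycle_coboundary c' hc' hsymm'
  refine ⟨f, fun s t => ?_⟩
  have h := hf s t
  rw [hc'unfold] at h
  rw [← h]
  exact (inv_mul_cancel_right _ _).symm
end

section
/- Let R be a ring, X ⊆ R a right denominator set, and suppose a₀,…,a_n ∈ R and x₀,…,x_n ∈ X satisfy a₀x₀⁻¹ = (a₁x₁⁻¹)(a₂x₂⁻¹)⋯(a_nx_n⁻¹) in the right localization RX⁻¹. Then there exist b₁,…,b_n ∈ R and y₁ = 1, y₂,…,y_n, z ∈ X such that a₁b₂⋯b_n z = a₀b₁, x_n y_n z = x₀ b₁, and x_{i-1} y_{i-1} b_i = a_i y_i for all i ∈ [2,n]. -/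
open MulOpposite OreLocalization

private theorem stmt_12_aux {R : Type*} [Ring R] (X : Submonoid Rᵐᵒᵖ)
    [OreLocalization.OreSet X] (a : ℕ → R) (x : ℕ → X) :
    ∀ n, 1 ≤ n → ∃ (b : ℕ → R) (y : ℕ → X),
      y 1 = 1 ∧
      (∀ i, 2 ≤ i → i ≤ n →
        unop ((x (i - 1) : Rᵐᵒᵖ)) * unop ((y (i - 1) : Rᵐᵒᵖ)) * b i
          = a i * unop ((y i : Rᵐᵒᵖ))) ∧
      ((List.range n).map (fun i => (op (a (n - i)) /ₒ x (n - i) : Rᵐᵒᵖ[X⁻¹]))).prod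
        = op (a 1 * ((List.range (n - 1)).map (fun i => b (i + 2))).prod)
            /ₒ (y n * x n) := by
  intro n hn
  induction n, hn using Nat.le_induction with
  | base =>
    refine ⟨fun _ => 1, fun _ => 1, rfl, fun i h2 h1 => by omega, ?_⟩
    simp [List.range_succ]
  | succ n hn ih =>
    obtain ⟨b, y, hy1, hchain, hprod⟩ := ih
    set s : X := y n * x n with hs
    set r : Rᵐᵒᵖ := op (a (n + 1)) with hr
    have hore : oreDenom r s * r = oreNum r s * s := ore_eq r s
    have hcore : a (n + 1) * unop ((oreDenom r s : Rᵐᵒᵖ))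
        = unop ((x n : Rᵐᵒᵖ)) * unop ((y n : Rᵐᵒᵖ)) * unop (oreNum r s) := by
      have := congrArg unop hore
      simp only [unop_mul, hr, hs, unop_op, Submonoid.coe_mul] at this
      exact this
    refine ⟨Function.update b (n + 1) (unop (oreNum r s)),
      Function.update y (n + 1) (oreDenom r s), ?_, ?_, ?_⟩
    · rw [Function.update_of_ne (by omega)]
      exact hy1
    · intro i h2 hi
      rcases eq_or_lt_of_le hi with hin | hin
      · subst hin
        rw [Function.update_self, Function.update_self,
          Function.update_of_ne (by omega), Nat.add_sub_cancel]
        exact hcore.symm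
      · have hi' : i ≤ n := by omega
        rw [Function.update_of_ne (by omega), Function.update_of_ne (by omega),
          Function.update_of_ne (by omega)]
        exact hchain i h2 hi'
    · -- product step
      rw [List.range_succ_eq_map, List.map_cons, List.prod_cons, List.map_map]
      have hmap : ((List.range n).map
          ((fun i => (op (a (n + 1 - i)) /ₒ x (n + 1 - i) : Rᵐᵒᵖ[X⁻¹])) ∘ Nat.succ))
          = (List.range n).map (fun i => (op (a (n - i)) /ₒ x (n - i) : Rᵐᵒᵖ[X⁻¹])) := by
        apply List.map_congr_left
        intro i _
        simp [Nat.succ_sub_succ]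
      rw [hmap, hprod]
      simp only [Nat.sub_zero]
      rw [oreDiv_mul_char r _ (x (n + 1)) s (oreNum r s) (oreDenom r s) hore]
      have hrange : List.range (n + 1 - 1)
          = List.range (n - 1) ++ [n - 1] := by
        rw [Nat.add_sub_cancel]
        conv_lhs => rw [← Nat.sub_add_cancel hn, List.range_succ]
      rw [hrange, List.map_append, List.prod_append, List.map_singleton,
        List.prod_singleton]
      have h1 : n - 1 + 2 = n + 1 := by omega
      have h2 : ((List.range (n - 1)).map
            (fun i => Function.update b (n + 1) (unop (oreNum r s)) (i + 2))).prod
          = ((List.range (n - 1)).map (fun i => b (i + 2))).prod := by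
        congr 1
        apply List.map_congr_left
        intro i hi
        rw [List.mem_range] at hi
        rw [Function.update_of_ne (by omega)]
      rw [h1, h2, Function.update_self, Function.update_self]
      simp only [op_mul, op_unop, mul_assoc]

/-- Common-denominator lemma for right Ore fractions.  The right localization
`RX⁻¹` of `R` at a right denominator set `X` is realized in Mathlib as the
(left-fraction) Ore localization of the opposite ring `Rᵐᵒᵖ` at the image
`X ⊆ Rᵐᵒᵖ` of `X`; the right fraction `a·x⁻¹` corresponds to
`op a /ₒ x`, and products get reversed.  If
`a₀x₀⁻¹ = (a₁x₁⁻¹)(a₂x₂⁻¹)⋯(a_nx_n⁻¹)` in `RX⁻¹`, then there are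
`b₁,…,b_n ∈ R` and `y₁ = 1, y₂,…,y_n, z ∈ X` with `a₁b₂⋯b_n z = a₀b₁`,
`x_n y_n z = x₀ b₁`, and `x_{i-1} y_{i-1} b_i = a_i y_i` for `2 ≤ i ≤ n`. -/
theorem stmt_12 {R : Type*} [Ring R] (X : Submonoid Rᵐᵒᵖ)
    [OreLocalization.OreSet X]
    (n : ℕ) (hn : 1 ≤ n) (a : ℕ → R) (x : ℕ → X)
    (h : (op (a 0) /ₒ x 0 : Rᵐᵒᵖ[X⁻¹]) =
      ((List.range n).map (fun i => (op (a (n - i)) /ₒ x (n - i) : Rᵐᵒᵖ[X⁻¹]))).prod) :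
    ∃ (b : ℕ → R) (y : ℕ → X) (z : X),
      y 1 = 1 ∧
      a 1 * ((List.range (n - 1)).map (fun i => b (i + 2))).prod * unop (z : Rᵐᵒᵖ)
        = a 0 * b 1 ∧
      unop ((x n : Rᵐᵒᵖ)) * unop ((y n : Rᵐᵒᵖ)) * unop ((z : Rᵐᵒᵖ))
        = unop ((x 0 : Rᵐᵒᵖ)) * b 1 ∧
      ∀ i, 2 ≤ i → i ≤ n →
        unop ((x (i - 1) : Rᵐᵒᵖ)) * unop ((y (i - 1) : Rᵐᵒᵖ)) * b i
          = a i * unop ((y i : Rᵐᵒᵖ)) := by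
  obtain ⟨b, y, hy1, hchain, hprod⟩ := stmt_12_aux X a x n hn
  rw [hprod, oreDiv_eq_iff] at h
  obtain ⟨u, v, hnum, hden⟩ := h
  refine ⟨Function.update b 1 (unop v), y, u, hy1, ?_, ?_, ?_⟩
  · rw [Function.update_self]
    have := congrArg unop hnum
    simp only [Submonoid.smul_def, smul_eq_mul, unop_mul, unop_op, Submonoid.coe_mul] at this
    have hm : ((List.range (n - 1)).map (fun i => Function.update b 1 (unop v) (i + 2))).prod
        = ((List.range (n - 1)).map (fun i => b (i + 2))).prod := by
      exact congrArg List.prod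
        (List.map_congr_left fun i _ => Function.update_of_ne (by omega) _ _)
    rw [hm, ← this]
  · rw [Function.update_self]
    have := congrArg unop hden
    simp only [unop_mul, Submonoid.coe_mul] at this
    exact this
  · intro i h2 hi
    rw [Function.update_of_ne (by omega)]
    exact hchain i h2 hi
end

section
/- With notation as in the Ore-fraction lemma: if additionally φ : R → S is a ring homomorphism mapping x₀,…,x_n, y₂,…,y_n, z to units of S, then φ(a₀)φ(x₀)⁻¹ = φ(a₁)φ(x₁)⁻¹·φ(a₂)φ(x₂)⁻¹ ⋯ φ(a_n)φ(x_n)⁻¹ in S. -/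
/-- If `φ : R → S` maps `x₀,…,x_n`, `y₂,…,y_n` and `z` to units of `S`, then
from the relations `y₁ = 1`, `a₁b₂⋯b_n z = a₀b₁`, `x_n y_n z = x₀b₁` and
`x_{i-1} y_{i-1} b_i = a_i y_i` (for `2 ≤ i ≤ n`) one obtains
`φ(a₀)φ(x₀)⁻¹ = φ(a₁)φ(x₁)⁻¹ ⋯ φ(a_n)φ(x_n)⁻¹` in `S`; here `w i` denotes the
two-sided inverse of `φ (x i)`. -/
theorem stmt_13 {R S : Type*} [Ring R] [Ring S] (φ : R →+* S)
    (n : ℕ) (hn : 1 ≤ n) (a b x y : ℕ → R) (z : R)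
    (hy1 : y 1 = 1)
    (h1 : a 1 * ((List.range (n - 1)).map (fun i => b (i + 2))).prod * z = a 0 * b 1)
    (h2 : x n * y n * z = x 0 * b 1)
    (h3 : ∀ i, 2 ≤ i → i ≤ n → x (i - 1) * y (i - 1) * b i = a i * y i)
    (hx : ∀ i, i ≤ n → IsUnit (φ (x i)))
    (hy : ∀ i, 2 ≤ i → i ≤ n → IsUnit (φ (y i)))
    (hz : IsUnit (φ z))
    (w : ℕ → S)
    (hw : ∀ i, i ≤ n → w i * φ (x i) = 1 ∧ φ (x i) * w i = 1) :
    φ (a 0) * w 0 =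
      ((List.range n).map (fun i => φ (a (i + 1)) * w (i + 1))).prod := by
  have hyn : IsUnit (φ (y n)) := by
    rcases Nat.lt_or_ge n 2 with h | h
    · interval_cases n
      · simp [hy1]
    · exact hy n h le_rfl
  have key : ∀ k, k + 1 ≤ n →
      ((List.range (k+1)).map (fun i => φ (a (i+1)) * w (i+1))).prod * φ (x (k+1) * y (k+1))
        = φ (a 1 * ((List.range k).map (fun i => b (i+2))).prod) := by
    intro k
    induction k with
    | zero =>
      intro hk
      simp only [zero_add, List.range_succ, List.range_zero, List.nil_append, List.map_cons,
        List.map_nil, List.prod_cons, List.prod_nil, mul_one, map_mul, hy1, map_one]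
      rw [mul_assoc, (hw 1 hk).1, mul_one]
    | succ k ih =>
      intro hk
      have hk' : k + 1 ≤ n := by omega
      have ihk := ih hk'
      have e : k + 2 - 1 = k + 1 := by omega
      have h := h3 (k+2) (by omega) hk
      rw [e] at h
      have tail : φ (a (k+2)) * w (k+2) * φ (x (k + 1 + 1) * y (k + 1 + 1))
          = φ (x (k+1) * y (k+1)) * φ (b (k+2)) := by
        have : (k + 1 + 1 : ℕ) = k + 2 := rfl
        rw [this, map_mul, ← mul_assoc, mul_assoc (φ (a (k+2))), (hw (k+2) hk).1,
          mul_one, ← map_mul, ← h, map_mul]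
      rw [List.range_succ, List.map_append, List.prod_append, List.map_cons, List.map_nil,
        List.prod_cons, List.prod_nil, mul_one, mul_assoc, tail, ← mul_assoc, ihk,
        List.range_succ, List.map_append, List.prod_append, List.map_cons, List.map_nil,
        List.prod_cons, List.prod_nil, mul_one, ← map_mul, ← mul_assoc]
  have key' := key (n-1) (by omega)
  have en : n - 1 + 1 = n := by omega
  rw [en] at key'
  set P := ((List.range n).map (fun i => φ (a (i+1)) * w (i+1))).prod with hP
  have e1 : P * φ (x n * y n) * φ z = φ (a 0) * φ (b 1) := by
    rw [key', ← map_mul, ← map_mul, h1, map_mul]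
  have e2 : P * φ (x n * y n) * φ z = P * φ (x 0) * φ (b 1) := by
    rw [mul_assoc, ← map_mul, h2, map_mul, ← mul_assoc]
  obtain ⟨u, hu0⟩ := hx 0 (Nat.zero_le n)
  have hub : φ (b 1) = ↑u⁻¹ * (φ (x 0) * φ (b 1)) := by
    rw [← hu0, ← mul_assoc, Units.inv_mul, one_mul]
  have hb1 : IsUnit (φ (b 1)) := by
    rw [hub, ← map_mul, ← h2, map_mul, map_mul]
    exact (u⁻¹).isUnit.mul (((hx n le_rfl).mul hyn).mul hz)
  have main : P * φ (x 0) = φ (a 0) := hb1.mul_right_cancel (e2.symm.trans e1)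
  rw [← main, mul_assoc, (hw 0 (Nat.zero_le n)).2, mul_one]
end

section
/- Let Γ be a free abelian group of rank n, χ : ℤⁿ × ℤⁿ → K× an alternating bicharacter, and φ : ℤⁿ → Γ a surjective group homomorphism. Then there exists a basis b₁,…,b_n of ℤⁿ such that b₁,…,b_m is a basis of ker φ and φ(b_{m+1}),…,φ(b_n) is a basis of Γ; moreover there exists a 2-cocycle c on Γ such that the twisted bicharacter χ_c(s,t) := χ(s,t)·c#(φ(s),φ(t)) satisfies χ_c(b_i,b_j) = χ(b_i,b_j) when i ≤ m or j ≤ m, and χ_c(b_i,b_j) = 1 when i,j > m. -/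
/-- A `Kˣ`-valued 2-cocycle on the abelian group `Γ`. -/
def IsCocycle {K : Type*} [Field K] {Γ : Type*} [AddCommGroup Γ]
    (c : Γ → Γ → Kˣ) : Prop :=
  ∀ s t u : Γ, c s (t + u) * c t u = c (s + t) u * c s t

/-- Given an alternating bicharacter `χ` on `ℤⁿ` and a surjection
`φ : ℤⁿ → Γ` onto a free abelian group, there is a basis `b₁,…,b_n` of `ℤⁿ`
with `b₁,…,b_m` a basis of `ker φ` and `φ(b_{m+1}),…,φ(b_n)` a basis of `Γ`,
and a 2-cocycle `c` on `Γ` such that the twisted bicharacter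
`χ_c(s,t) = χ(s,t)·c#(φ s, φ t)` agrees with `χ` on pairs `(b_i,b_j)` with
`i ≤ m` or `j ≤ m`, and equals `1` on pairs with `i, j > m`. -/
theorem stmt_17 {K : Type*} [Field K] {n : ℕ} {Γ : Type*} [AddCommGroup Γ]
    [Module.Free ℤ Γ]
    (χ : (Fin n → ℤ) → (Fin n → ℤ) → Kˣ)
    (hχ₁ : ∀ s t u : Fin n → ℤ, χ (s + t) u = χ s u * χ t u)
    (hχ₂ : ∀ s t u : Fin n → ℤ, χ s (t + u) = χ s t * χ s u)
    (hχalt : ∀ s : Fin n → ℤ, χ s s = 1)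
    (φ : (Fin n → ℤ) →ₗ[ℤ] Γ) (hφ : Function.Surjective φ) :
    ∃ (m : ℕ) (hm : m ≤ n) (b : Module.Basis (Fin n) ℤ (Fin n → ℤ)),
      (∃ bK : Module.Basis (Fin m) ℤ (LinearMap.ker φ),
        ∀ i : Fin m, (bK i : Fin n → ℤ) = b ⟨(i : ℕ), lt_of_lt_of_le i.isLt hm⟩) ∧
      (∃ bΓ : Module.Basis {i : Fin n // m ≤ (i : ℕ)} ℤ Γ, ∀ i, bΓ i = φ (b i)) ∧
      ∃ c : Γ → Γ → Kˣ, IsCocycle c ∧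
        (∀ i j : Fin n, ((i : ℕ) < m ∨ (j : ℕ) < m) →
          χ (b i) (b j) * (c (φ (b i)) (φ (b j)) * (c (φ (b j)) (φ (b i)))⁻¹)
            = χ (b i) (b j)) ∧
        (∀ i j : Fin n, m ≤ (i : ℕ) → m ≤ (j : ℕ) →
          χ (b i) (b j) * (c (φ (b i)) (φ (b j)) * (c (φ (b j)) (φ (b i)))⁻¹)
            = 1) := by
  classical
  -- antisymmetry of χ
  have hanti : ∀ s t, χ s t * χ t s = 1 := by
    intro s t
    have h := hχalt (s + t)
    rw [hχ₁, hχ₂, hχ₂, hχalt, hχalt, one_mul, mul_one] at h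
    exact h
  haveI : Module.Finite ℤ Γ := Module.Finite.of_surjective φ hφ
  obtain ⟨σ, hσ0⟩ := Module.projective_lifting_property φ LinearMap.id hφ
  have hσ : ∀ γ, φ (σ γ) = γ := fun γ => by
    have := LinearMap.congr_fun hσ0 γ; simpa using this
  set k := Module.finrank ℤ Γ with hk
  set bΓ : Module.Basis (Fin k) ℤ Γ := Module.finBasis ℤ Γ with hbΓ
  obtain ⟨m, bK⟩ := Submodule.basisOfPid (Pi.basisFun ℤ (Fin n)) (LinearMap.ker φ)
  -- the splitting equivalence
  set π : (Fin n → ℤ) →ₗ[ℤ] (Fin n → ℤ) := LinearMap.id - σ ∘ₗ φ with hπ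
  have hcod : ∀ x, π x ∈ LinearMap.ker φ := by
    intro x
    simp [hπ, LinearMap.mem_ker, hσ, map_sub]
  set f : (Fin n → ℤ) →ₗ[ℤ] (LinearMap.ker φ × Γ) :=
    LinearMap.prod (π.codRestrict (LinearMap.ker φ) hcod) φ with hf
  set g : (LinearMap.ker φ × Γ) →ₗ[ℤ] (Fin n → ℤ) :=
    LinearMap.coprod (LinearMap.ker φ).subtype σ with hg
  have h1 : f.comp g = LinearMap.id := by
    apply LinearMap.ext
    rintro ⟨⟨x, hx⟩, γ⟩
    have hx0 : φ x = 0 := hx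
    apply Prod.ext
    · apply Subtype.ext
      simp [hf, hg, hπ, LinearMap.codRestrict, hx0, hσ, map_add]
    · simp [hf, hg, hx0, hσ, map_add]
  have h2 : g.comp f = LinearMap.id := by
    apply LinearMap.ext
    intro x
    simp [hf, hg, hπ, LinearMap.codRestrict, sub_add_cancel]
  set e : (Fin n → ℤ) ≃ₗ[ℤ] (LinearMap.ker φ × Γ) := LinearEquiv.ofLinear f g h1 h2 with he
  set b0 : Module.Basis (Fin m ⊕ Fin k) ℤ (Fin n → ℤ) := (bK.prod bΓ).map e.symm with hb0
  have hb0l : ∀ j : Fin m, b0 (Sum.inl j) = (bK j : Fin n → ℤ) := by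
    intro j
    simp [hb0, Module.Basis.prod_apply, he, hg]
  have hb0r : ∀ p : Fin k, b0 (Sum.inr p) = σ (bΓ p) := by
    intro p
    simp [hb0, Module.Basis.prod_apply, he, hg]
  have hmk : m + k = n := by
    have := Fintype.card_congr (b0.indexEquiv (Pi.basisFun ℤ (Fin n)))
    simpa using this
  have hm : m ≤ n := by omega
  set idx : (Fin m ⊕ Fin k) ≃ Fin n := finSumFinEquiv.trans (finCongr hmk) with hidx
  have hidxl : ∀ j : Fin m, ((idx (Sum.inl j) : Fin n) : ℕ) = (j : ℕ) := by
    intro j; simp [hidx]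
  have hidxr : ∀ p : Fin k, ((idx (Sum.inr p) : Fin n) : ℕ) = m + (p : ℕ) := by
    intro p; simp [hidx]
  set b : Module.Basis (Fin n) ℤ (Fin n → ℤ) := b0.reindex idx with hb
  have hbl : ∀ j : Fin m, b (idx (Sum.inl j)) = (bK j : Fin n → ℤ) := by
    intro j; rw [hb, Module.Basis.reindex_apply, Equiv.symm_apply_apply, hb0l]
  have hbr : ∀ p : Fin k, b (idx (Sum.inr p)) = σ (bΓ p) := by
    intro p; rw [hb, Module.Basis.reindex_apply, Equiv.symm_apply_apply, hb0r]
  have hφbr : ∀ p : Fin k, φ (b (idx (Sum.inr p))) = bΓ p := by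
    intro p; rw [hbr, hσ]
  have hφbl : ∀ j : Fin m, φ (b (idx (Sum.inl j))) = 0 := by
    intro j; rw [hbl]; exact (bK j).2
  -- basis of Γ indexed by {i // m ≤ i}
  set eq2 : Fin k ≃ {i : Fin n // m ≤ (i : ℕ)} :=
    { toFun := fun p => ⟨idx (Sum.inr p), by rw [hidxr]; omega⟩
      invFun := fun i => ⟨((i : Fin n) : ℕ) - m, by have := i.2; have := (i : Fin n).2; omega⟩
      left_inv := by intro p; apply Fin.ext; simp [hidxr]
      right_inv := by
        rintro ⟨i, hi⟩
        apply Subtype.ext; apply Fin.ext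
        simp only []
        rw [hidxr]
        simp only []
        omega } with heq2
  -- the cocycle
  set u : Fin k → Fin k → Kˣ := fun p q =>
    if p < q then (χ (σ (bΓ p)) (σ (bΓ q)))⁻¹ else 1 with hudef
  set c : Γ → Γ → Kˣ := fun γ δ =>
    ∏ p : Fin k, ∏ q : Fin k, (u p q) ^ (bΓ.repr γ p * bΓ.repr δ q) with hcdef
  have hc1 : ∀ s t v : Γ, c (s + t) v = c s v * c t v := by
    intro s t v
    rw [hcdef]
    simp only [map_add, Finsupp.add_apply, add_mul, zpow_add]
    rw [← Finset.prod_mul_distrib]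
    exact Finset.prod_congr rfl fun p _ => by rw [← Finset.prod_mul_distrib]
  have hc2 : ∀ s t v : Γ, c s (t + v) = c s t * c s v := by
    intro s t v
    rw [hcdef]
    simp only [map_add, Finsupp.add_apply, mul_add, zpow_add]
    rw [← Finset.prod_mul_distrib]
    exact Finset.prod_congr rfl fun p _ => by rw [← Finset.prod_mul_distrib]
  have hc0l : ∀ δ, c 0 δ = 1 := by
    intro δ; rw [hcdef]; simp
  have hc0r : ∀ γ, c γ 0 = 1 := by
    intro γ; rw [hcdef]; simp
  have hcb : ∀ p q : Fin k, c (bΓ p) (bΓ q) = u p q := by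
    intro p q
    rw [hcdef]
    simp only [Module.Basis.repr_self]
    rw [Finset.prod_eq_single p (fun r _ hr => by
      simp [Finsupp.single_apply, Ne.symm hr]) (by simp)]
    rw [Finset.prod_eq_single q (fun r _ hr => by
      simp [Finsupp.single_apply, Ne.symm hr]) (by simp)]
    simp
  refine ⟨m, hm, b, ⟨bK, ?_⟩, ⟨bΓ.reindex eq2, ?_⟩, c, ?_, ?_, ?_⟩
  · intro i
    have : (⟨(i : ℕ), lt_of_lt_of_le i.isLt hm⟩ : Fin n) = idx (Sum.inl i) := by
      apply Fin.ext; rw [hidxl]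
    rw [this, hbl]
  · intro i
    rw [Module.Basis.reindex_apply]
    have h3 : (i : Fin n) = idx (Sum.inr (eq2.symm i)) := by
      conv_lhs => rw [← eq2.apply_symm_apply i]
      rfl
    rw [h3, hφbr]
  · intro s t v
    rw [hc2, hc1]
    have h4 : c s t * c s v * c t v = c s v * c t v * c s t := by
      rw [mul_comm (c s t) (c s v), mul_assoc, mul_comm (c s t) (c t v), ← mul_assoc]
    exact h4
  · intro i j hij
    rcases hij with hi | hj
    · have : i = idx (Sum.inl ⟨(i : ℕ), hi⟩) := by apply Fin.ext; rw [hidxl]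
      rw [this, hφbl, hc0l, hc0r, one_mul, inv_one, mul_one]
    · have : j = idx (Sum.inl ⟨(j : ℕ), hj⟩) := by apply Fin.ext; rw [hidxl]
      rw [this, hφbl, hc0l, hc0r, one_mul, inv_one, mul_one]
  · intro i j hi hj
    obtain ⟨p, hpv⟩ : ∃ p : Fin k, (p : ℕ) = (i : ℕ) - m :=
      ⟨⟨(i : ℕ) - m, by have := i.2; omega⟩, rfl⟩
    obtain ⟨q, hqv⟩ : ∃ q : Fin k, (q : ℕ) = (j : ℕ) - m :=
      ⟨⟨(j : ℕ) - m, by have := j.2; omega⟩, rfl⟩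
    have hip : i = idx (Sum.inr p) := by apply Fin.ext; rw [hidxr, hpv]; omega
    have hjq : j = idx (Sum.inr q) := by apply Fin.ext; rw [hidxr, hqv]; omega
    rw [hip, hjq, hφbr, hφbr, hcb, hcb, hbr, hbr]
    simp only [hudef]
    rcases lt_trichotomy p q with hpq | hpq | hpq
    · rw [if_pos hpq, if_neg (lt_asymm hpq)]
      simp
    · subst hpq
      rw [if_neg (lt_irrefl p), hχalt]
      simp
    · rw [if_neg (lt_asymm hpq), if_pos hpq, one_mul, inv_inv]
      exact hanti _ _
end
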